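/- Let ℓ be a slowly varying function at 0 (i.e., ℓ(xt)/ℓ(x) → 1 as x → 0+ for every t > 0). Fix t > s > 0. Then ℓ(1 - (s/t)^(1/n)) / ℓ(1/n) → 1 as n → ∞. -/

import Mathlib

open Filter Real

open MeasureTheory in
/-- Uniform convergence theorem for slowly varying functions, additive form,
specialized to sequences. -/
lemma uct_add (h : ℝ → ℝ) (hm : Measurable h)
    (H : ∀ p : ℕ → ℝ, Tendsto p atTop atTop → ∀ v : ℝ,
      Tendsto (fun n => h (p n + v) - h (p n)) atTop (nhds 0))
    (u v : ℕ → ℝ) (v₀ : ℝ) (hu : Tendsto u atTop atTop)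
    (hv : Tendsto v atTop (nhds v₀)) :
    Tendsto (fun n => h (u n + v n) - h (u n)) atTop (nhds 0) := by
  have hw : Tendsto (fun n => u n + v n) atTop atTop := by
    apply tendsto_atTop_mono' _ _ (tendsto_atTop_add_const_right _ (v₀ - 1) hu)
    filter_upwards [hv.eventually (eventually_ge_nhds (show v₀ - 1 < v₀ by linarith))] with n hn
    exact add_le_add (le_refl _) hn
  set f : ℕ → ℝ → ℝ := fun n x => h (u n + x) - h (u n) with hf
  set F : ℕ → ℝ → ℝ := fun n x => h ((u n + v n) + x) - h (u n + v n) with hF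
  have hfm : ∀ n, StronglyMeasurable (f n) := fun n =>
    ((hm.comp (measurable_const.add measurable_id)).sub measurable_const).stronglyMeasurable
  have hFm : ∀ n, StronglyMeasurable (F n) := fun n =>
    ((hm.comp (measurable_const.add measurable_id)).sub measurable_const).stronglyMeasurable
  obtain ⟨t₁, ht₁s, ht₁m, ht₁μ, hU₁⟩ := tendstoUniformlyOn_of_ae_tendsto (μ := volume)
    (g := fun _ => (0:ℝ)) hfm stronglyMeasurable_const
    (measurableSet_Icc (a := v₀ - 1) (b := v₀ + 1)) measure_Icc_lt_top.ne
    (Eventually.of_forall fun x _ => H u hu x) (by norm_num : (0:ℝ) < 1/4)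
  obtain ⟨t₂, ht₂s, ht₂m, ht₂μ, hU₂⟩ := tendstoUniformlyOn_of_ae_tendsto (μ := volume)
    (g := fun _ => (0:ℝ)) hFm stronglyMeasurable_const
    (measurableSet_Icc (a := (-1:ℝ)) (b := 1)) measure_Icc_lt_top.ne
    (Eventually.of_forall fun x _ => H _ hw x) (by norm_num : (0:ℝ) < 1/4)
  have hE₁ : ENNReal.ofReal (7/4) ≤ volume (Set.Icc (v₀-1) (v₀+1) \ t₁) := by
    rw [measure_diff ht₁s ht₁m.nullMeasurableSet
      (ht₁μ.trans_lt ENNReal.ofReal_lt_top).ne, Real.volume_Icc,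
      show v₀ + 1 - (v₀ - 1) = 2 by ring]
    calc ENNReal.ofReal (7/4) = ENNReal.ofReal 2 - ENNReal.ofReal (1/4) := by
          rw [← ENNReal.ofReal_sub _ (by norm_num)]; norm_num
      _ ≤ ENNReal.ofReal 2 - volume t₁ := tsub_le_tsub_left ht₁μ _
  have hE₂ : ENNReal.ofReal (7/4) ≤ volume (Set.Icc (-1:ℝ) 1 \ t₂) := by
    rw [measure_diff ht₂s ht₂m.nullMeasurableSet
      (ht₂μ.trans_lt ENNReal.ofReal_lt_top).ne, Real.volume_Icc,
      show (1:ℝ) - (-1) = 2 by ring]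
    calc ENNReal.ofReal (7/4) = ENNReal.ofReal 2 - ENNReal.ofReal (1/4) := by
          rw [← ENNReal.ofReal_sub _ (by norm_num)]; norm_num
      _ ≤ ENNReal.ofReal 2 - volume t₂ := tsub_le_tsub_left ht₂μ _
  rw [Metric.tendsto_nhds]
  intro ε hε
  filter_upwards [Metric.tendstoUniformlyOn_iff.1 hU₁ (ε/2) (half_pos hε),
    Metric.tendstoUniformlyOn_iff.1 hU₂ (ε/2) (half_pos hε),
    Metric.tendsto_nhds.1 hv (1/8) (by norm_num)] with n h1 h2 h3
  have hvn : |v n - v₀| < 1/8 := by rwa [Real.dist_eq] at h3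
  set A : Set ℝ := Set.Icc (-1:ℝ) 1 \ t₂ with hA
  set B : Set ℝ := (fun y => y + v n) ⁻¹' (Set.Icc (v₀-1) (v₀+1) \ t₁) with hB
  have hBm : MeasurableSet B := (measurableSet_Icc.diff ht₁m).preimage (measurable_add_const _)
  have hμB : volume B = volume (Set.Icc (v₀-1) (v₀+1) \ t₁) :=
    measure_preimage_add_right volume (v n) _
  have hsub : A ∪ B ⊆ Set.Icc (-(9/8) : ℝ) (9/8) := by
    rintro x (hx | hx)
    · have := hx.1
      constructor <;> [linarith [this.1]; linarith [this.2]]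
    · have hx1 := hx.1
      have habs := abs_lt.1 hvn
      have hl := hx1.1
      have hr := hx1.2
      dsimp only at hl hr
      constructor <;> [linarith; linarith]
  have key : ENNReal.ofReal (7/4) + ENNReal.ofReal (7/4) ≤ volume (A ∪ B) + volume (A ∩ B) := by
    rw [measure_union_add_inter A hBm, hμB]
    exact add_le_add hE₂ hE₁
  have hABne : volume (A ∩ B) ≠ 0 := by
    intro h0
    rw [h0, add_zero] at key
    have hle : volume (A ∪ B) ≤ ENNReal.ofReal (9/4) := by
      refine (measure_mono hsub).trans ?_
      rw [Real.volume_Icc]; norm_num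
    have := key.trans hle
    rw [← ENNReal.ofReal_add (by norm_num) (by norm_num),
      ENNReal.ofReal_le_ofReal_iff (by norm_num)] at this
    norm_num at this
  obtain ⟨x, hxA, hxB⟩ := nonempty_of_measure_ne_zero hABne
  have hxB' : x + v n ∈ Set.Icc (v₀-1) (v₀+1) \ t₁ := hxB
  have e1 := h1 (x + v n) hxB'
  have e2 := h2 x hxA
  have key2 : h (u n + v n) - h (u n) = f n (x + v n) - F n x := by
    simp only [hf, hF]
    rw [show u n + (x + v n) = (u n + v n) + x by ring]
    ring
  rw [Real.dist_eq, sub_zero, key2]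
  have b1 : |f n (x + v n)| < ε/2 := by rwa [dist_eq, zero_sub, abs_neg] at e1
  have b2 : |F n x| < ε/2 := by rwa [dist_eq, zero_sub, abs_neg] at e2
  calc |f n (x + v n) - F n x| ≤ |f n (x + v n)| + |F n x| := abs_sub _ _
    _ < ε/2 + ε/2 := add_lt_add b1 b2
    _ = ε := by ring

/-- If `ℓ` is (measurable, positive on `(0,1]`) slowly varying at `0`, i.e.
`ℓ(x t)/ℓ(x) → 1` as `x → 0+` for every `t > 0`, then for fixed `t > s > 0`,
`ℓ(1 - (s/t)^(1/n)) / ℓ(1/n) → 1` as `n → ∞`. -/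
theorem stmt8 (ℓ : ℝ → ℝ) (hmeas : Measurable ℓ)
    (hpos : ∀ x : ℝ, 0 < x → x ≤ 1 → 0 < ℓ x)
    (hslow : ∀ t : ℝ, 0 < t →
      Tendsto (fun x => ℓ (x * t) / ℓ x) (nhdsWithin 0 (Set.Ioi 0)) (nhds 1))
    (s t : ℝ) (hs : 0 < s) (hst : s < t) :
    Tendsto (fun n : ℕ => ℓ (1 - (s / t) ^ ((1 : ℝ) / n)) / ℓ (1 / n))
      atTop (nhds 1) := by
  have ht : 0 < t := hs.trans hst
  set r : ℝ := s / t with hrdef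
  have hr0 : 0 < r := div_pos hs ht
  have hr1 : r < 1 := (div_lt_one ht).2 hst
  have hlogr : Real.log r < 0 := Real.log_neg hr0 hr1
  set c : ℝ := -Real.log r with hcdef
  have hc : 0 < c := by simp only [hcdef]; linarith
  set h : ℝ → ℝ := fun x => Real.log (ℓ (Real.exp (-x))) with hh
  have hm : Measurable h :=
    Real.measurable_log.comp (hmeas.comp (Real.measurable_exp.comp measurable_neg))
  -- pointwise slow variation in additive form
  have H : ∀ p : ℕ → ℝ, Tendsto p atTop atTop → ∀ v : ℝ,
      Tendsto (fun n => h (p n + v) - h (p n)) atTop (nhds 0) := by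
    intro p hp v
    have hx : Tendsto (fun n => Real.exp (-p n)) atTop (nhdsWithin 0 (Set.Ioi 0)) := by
      apply tendsto_nhdsWithin_of_tendsto_nhds_of_eventually_within
      · exact Real.tendsto_exp_atBot.comp (tendsto_neg_atBot_iff.2 hp)
      · exact Eventually.of_forall fun n => Real.exp_pos _
    have hratio : Tendsto (fun n => ℓ (Real.exp (-p n) * Real.exp (-v)) / ℓ (Real.exp (-p n)))
        atTop (nhds 1) := (hslow (Real.exp (-v)) (Real.exp_pos _)).comp hx
    have hlog : Tendsto
        (fun n => Real.log (ℓ (Real.exp (-p n) * Real.exp (-v)) / ℓ (Real.exp (-p n))))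
        atTop (nhds 0) := by
      have := (Real.continuousAt_log one_ne_zero).tendsto.comp hratio
      simpa [Function.comp_def] using this
    apply hlog.congr'
    filter_upwards [hp.eventually_ge_atTop (max 0 (-v))] with n hn
    have h1 : 0 ≤ p n := le_trans (le_max_left _ _) hn
    have h2 : -v ≤ p n := le_trans (le_max_right _ _) hn
    have hb0 : (0:ℝ) < Real.exp (-p n) := Real.exp_pos _
    have hb1 : Real.exp (-p n) ≤ 1 := Real.exp_le_one_iff.2 (by linarith)
    have ha0 : (0:ℝ) < Real.exp (-p n) * Real.exp (-v) := by positivity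
    have ha1 : Real.exp (-p n) * Real.exp (-v) ≤ 1 := by
      rw [← Real.exp_add]; exact Real.exp_le_one_iff.2 (by linarith)
    rw [Real.log_div (hpos _ ha0 ha1).ne' (hpos _ hb0 hb1).ne']
    simp only [hh, neg_add, Real.exp_add]
  set a : ℕ → ℝ := fun n => 1 - r ^ ((1:ℝ)/n) with ha
  set u : ℕ → ℝ := fun n => Real.log n with hudef
  set v : ℕ → ℝ := fun n => -Real.log ((n:ℝ) * a n) with hvdef
  have hu : Tendsto u atTop atTop :=
    Real.tendsto_log_atTop.comp tendsto_natCast_atTop_atTop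
  -- n * a n → c
  have hna : Tendsto (fun n : ℕ => (n:ℝ) * a n) atTop (nhds c) := by
    have hx0 : Tendsto (fun n : ℕ => Real.log r / n) atTop
        (nhdsWithin 0 {(0:ℝ)}ᶜ) := by
      apply tendsto_nhdsWithin_of_tendsto_nhds_of_eventually_within
      · exact tendsto_const_div_atTop_nhds_zero_nat _
      · filter_upwards [eventually_ge_atTop 1] with n hn
        have hn0 : (0:ℝ) < n := by exact_mod_cast hn
        simp only [Set.mem_compl_iff, Set.mem_singleton_iff]
        exact div_ne_zero hlogr.ne (by positivity)
    have hslope : Tendsto (slope Real.exp 0) (nhdsWithin 0 {(0:ℝ)}ᶜ) (nhds 1) := by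
      have := hasDerivAt_iff_tendsto_slope.1 (Real.hasDerivAt_exp 0)
      simpa using this
    have hcomp := (hslope.comp hx0).const_mul (-Real.log r)
    have : Tendsto (fun n : ℕ =>
        -Real.log r * ((Real.exp (Real.log r / n) - 1) / (Real.log r / n)))
        atTop (nhds c) := by
      have h2 : -Real.log r * 1 = c := by rw [hcdef]; ring
      rw [← h2]
      apply hcomp.congr
      intro n
      simp [slope_def_field, Function.comp]
    apply this.congr'
    filter_upwards [eventually_ge_atTop 1] with n hn
    have hn0 : (0:ℝ) < n := by exact_mod_cast hn
    have hrc : r ^ ((1:ℝ)/n) = Real.exp (Real.log r / n) := by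
      rw [Real.rpow_def_of_pos hr0]
      ring_nf
    have hne : Real.log r / (n:ℝ) ≠ 0 := div_ne_zero hlogr.ne (by positivity)
    field_simp [ha, hrc, hlogr.ne, hn0.ne']
    ring_nf
    simp only [ha, hrc]
    ring_nf
  have hv : Tendsto v atTop (nhds (-Real.log c)) := by
    have := (Real.continuousAt_log hc.ne').tendsto.comp hna
    exact this.neg
  have huct := uct_add h hm H u v (-Real.log c) hu hv
  have hexp : Tendsto (fun n => Real.exp (h (u n + v n) - h (u n))) atTop (nhds 1) := by
    have := Real.continuous_exp.continuousAt.tendsto.comp huct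
    simpa [Function.comp_def] using this
  apply hexp.congr'
  filter_upwards [eventually_ge_atTop 1] with n hn
  have hn0 : (0:ℝ) < n := by exact_mod_cast hn
  have hpow : (0:ℝ) < r ^ ((1:ℝ)/n) := Real.rpow_pos_of_pos hr0 _
  have hpow1 : r ^ ((1:ℝ)/n) < 1 :=
    Real.rpow_lt_one hr0.le hr1 (by positivity)
  have ha0 : 0 < a n := by simp only [ha]; linarith
  have ha1 : a n ≤ 1 := by simp only [ha]; linarith
  have hb0 : (0:ℝ) < 1 / n := by positivity
  have hb1 : (1:ℝ) / n ≤ 1 := by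
    rw [div_le_one hn0]; exact_mod_cast hn
  have huvn : u n + v n = -Real.log (a n) := by
    simp only [hudef, hvdef]
    rw [Real.log_mul hn0.ne' ha0.ne']
    ring
  have hexpuv : Real.exp (-(u n + v n)) = a n := by
    rw [huvn, neg_neg, Real.exp_log ha0]
  have hexpu : Real.exp (-(u n)) = 1 / n := by
    simp only [hudef]
    rw [Real.exp_neg, Real.exp_log hn0, one_div]
  have hla : 0 < ℓ (a n) := hpos _ ha0 ha1
  have hlb : 0 < ℓ (1 / n) := hpos _ hb0 hb1
  show Real.exp (h (u n + v n) - h (u n)) = ℓ (1 - r ^ ((1:ℝ)/n)) / ℓ (1/n)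
  have : (1 : ℝ) - r ^ ((1:ℝ)/n) = a n := rfl
  rw [this]
  simp only [hh, hexpuv, hexpu]
  rw [Real.exp_sub, Real.exp_log hla, Real.exp_log hlb]
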